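/- For integers m, n ≥ 1 with m < n and reals s, t ≥ 0, define δ_k as: δ_k = 4(k+n+1)/((2(k+n)+s+2)(2(k+n)+t+2)) for 0 ≤ k < m, and δ_k = 4(k+n+1)/((2(k+n)+s+2)(2(k+n)+t+2)) − 4(k−m+1)/((2(k+n−m)+s+2)(2k+t+2)) for k ≥ m. Then δ_k = (mn + (ms+nt)/2)/k³ + O(1/k⁴) as k → ∞. -/

import Mathlib

private lemma aux14 (q r w k : ℝ) (hq : 0 ≤ q) (hr : 0 ≤ r) (hqw : q ≤ w) (hk : 1 ≤ k) :
    |((q*r*w - ((q+r)*w - q*r)*(q+r))*k - ((q+r)*w - q*r)*(q*r)) / (k^3*((k+q)*(k+r)))|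
      ≤ (q*r*w + (q+r)*w*(q+r) + (q+r)*w*(q*r)) / k^4 := by
  have hk0 : (0:ℝ) < k := lt_of_lt_of_le one_pos hk
  have hw0 : (0:ℝ) ≤ w := hq.trans hqw
  have hqr : (0:ℝ) ≤ q*r := mul_nonneg hq hr
  have hqrw : (0:ℝ) ≤ q*r*w := mul_nonneg hqr hw0
  have hqrsum : (0:ℝ) ≤ q + r := by linarith
  have ha0 : (0:ℝ) ≤ (q+r)*w - q*r := by
    nlinarith [mul_nonneg hq hw0, mul_nonneg hr (sub_nonneg.2 hqw)]
  have ha1 : (q+r)*w - q*r ≤ (q+r)*w := by linarith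
  have hqrw0 : (0:ℝ) ≤ (q+r)*w := mul_nonneg hqrsum hw0
  have hb1 : (0:ℝ) ≤ (q+r)*w*(q+r) := mul_nonneg hqrw0 hqrsum
  have hb2 : (0:ℝ) ≤ (q+r)*w*(q*r) := mul_nonneg hqrw0 hqr
  have hγ : |q*r*w - ((q+r)*w - q*r)*(q+r)| ≤ q*r*w + (q+r)*w*(q+r) := by
    rw [abs_le]
    constructor
    · nlinarith [mul_le_mul_of_nonneg_right ha1 hqrsum]
    · nlinarith [mul_nonneg ha0 hqrsum]
  have hρ : |((q+r)*w - q*r)*(q*r)| ≤ (q+r)*w*(q*r) := by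
    rw [abs_of_nonneg (mul_nonneg ha0 hqr)]
    exact mul_le_mul_of_nonneg_right ha1 hqr
  have hnum : |(q*r*w - ((q+r)*w - q*r)*(q+r))*k - ((q+r)*w - q*r)*(q*r)|
      ≤ (q*r*w + (q+r)*w*(q+r) + (q+r)*w*(q*r)) * k := by
    have h1 : |(q*r*w - ((q+r)*w - q*r)*(q+r))*k - ((q+r)*w - q*r)*(q*r)|
        ≤ |(q*r*w - ((q+r)*w - q*r)*(q+r))*k| + |((q+r)*w - q*r)*(q*r)| := abs_sub _ _
    have h2 : |(q*r*w - ((q+r)*w - q*r)*(q+r))*k| = |q*r*w - ((q+r)*w - q*r)*(q+r)| * k := by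
      rw [abs_mul, abs_of_pos hk0]
    have h3 := mul_le_mul_of_nonneg_right hγ hk0.le
    have h4 : (q+r)*w*(q*r) ≤ ((q+r)*w*(q*r)) * k := le_mul_of_one_le_right hb2 hk
    nlinarith
  have hden : k^5 ≤ k^3*((k+q)*(k+r)) := by
    have h1 : k*k ≤ (k+q)*(k+r) :=
      mul_le_mul (by linarith) (by linarith) hk0.le (by linarith)
    have h2 := mul_le_mul_of_nonneg_left h1 (pow_nonneg hk0.le 3)
    nlinarith
  have hdpos : (0:ℝ) < k^3*((k+q)*(k+r)) := by positivity
  rw [abs_div, abs_of_pos hdpos]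
  calc |(q*r*w - ((q+r)*w - q*r)*(q+r))*k - ((q+r)*w - q*r)*(q*r)| / (k^3*((k+q)*(k+r)))
      ≤ ((q*r*w + (q+r)*w*(q+r) + (q+r)*w*(q*r)) * k) / k^5 :=
        div_le_div₀ (mul_nonneg (by linarith) hk0.le) hnum (by positivity) hden
    _ = (q*r*w + (q+r)*w*(q+r) + (q+r)*w*(q*r)) / k^4 := by
        rw [div_eq_div_iff (by positivity) (by positivity)]; ring

set_option maxHeartbeats 1000000 in
/-- For `n > m ≥ 1` and reals `s, t ≥ 0`,
`δ_k = (mn + (ms+nt)/2)/k³ + O(1/k⁴)` as `k → ∞`. -/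
theorem stmt14 (m n : ℕ) (hm : 1 ≤ m) (hmn : m < n) (s t : ℝ) (hs : 0 ≤ s) (ht : 0 ≤ t) :
    ∃ M : ℝ, ∀ k : ℕ, 1 ≤ k →
      |(if k < m then
            4 * ((k : ℝ) + n + 1) / ((2 * ((k : ℝ) + n) + s + 2) * (2 * ((k : ℝ) + n) + t + 2))
          else
            4 * ((k : ℝ) + n + 1) / ((2 * ((k : ℝ) + n) + s + 2) * (2 * ((k : ℝ) + n) + t + 2))
              - 4 * ((k : ℝ) - m + 1) /
                  ((2 * ((k : ℝ) + n - m) + s + 2) * (2 * (k : ℝ) + t + 2)))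
        - ((m : ℝ) * n + ((m : ℝ) * s + (n : ℝ) * t) / 2) / (k : ℝ) ^ 3| ≤ M / (k : ℝ) ^ 4 := by
  have hm1 : (1:ℝ) ≤ (m:ℝ) := by exact_mod_cast hm
  have hmn' : (m:ℝ) + 1 ≤ (n:ℝ) := by exact_mod_cast hmn
  have hc0 : (0:ℝ) ≤ ((m : ℝ) * n + ((m : ℝ) * s + (n : ℝ) * t) / 2) := by positivity
  have hq2 : (0:ℝ) ≤ ((n:ℝ)-(m:ℝ)+1+s/2) := by linarith
  have hr2 : (0:ℝ) ≤ ((1:ℝ)+t/2) := by linarith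
  have hB2 : (0:ℝ) ≤ (((n:ℝ)-(m:ℝ)+1+s/2)*((1:ℝ)+t/2)*((n:ℝ)+1+(s+t)/2) + (((n:ℝ)-(m:ℝ)+1+s/2)+((1:ℝ)+t/2))*((n:ℝ)+1+(s+t)/2)*(((n:ℝ)-(m:ℝ)+1+s/2)+((1:ℝ)+t/2)) + (((n:ℝ)-(m:ℝ)+1+s/2)+((1:ℝ)+t/2))*((n:ℝ)+1+(s+t)/2)*(((n:ℝ)-(m:ℝ)+1+s/2)*((1:ℝ)+t/2))) := by positivity
  have hB1 : (0:ℝ) ≤ (((n:ℝ)+1+s/2)*((n:ℝ)+1+t/2)*((n:ℝ)+1+(s+t)/2) + (((n:ℝ)+1+s/2)+((n:ℝ)+1+t/2))*((n:ℝ)+1+(s+t)/2)*(((n:ℝ)+1+s/2)+((n:ℝ)+1+t/2)) + (((n:ℝ)+1+s/2)+((n:ℝ)+1+t/2))*((n:ℝ)+1+(s+t)/2)*(((n:ℝ)+1+s/2)*((n:ℝ)+1+t/2))) := by positivity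
  refine ⟨(m:ℝ)^4*(1 + ((m : ℝ) * n + ((m : ℝ) * s + (n : ℝ) * t) / 2)) + ((((n:ℝ)+1+s/2)*((n:ℝ)+1+t/2)*((n:ℝ)+1+(s+t)/2) + (((n:ℝ)+1+s/2)+((n:ℝ)+1+t/2))*((n:ℝ)+1+(s+t)/2)*(((n:ℝ)+1+s/2)+((n:ℝ)+1+t/2)) + (((n:ℝ)+1+s/2)+((n:ℝ)+1+t/2))*((n:ℝ)+1+(s+t)/2)*(((n:ℝ)+1+s/2)*((n:ℝ)+1+t/2))) + (((n:ℝ)-(m:ℝ)+1+s/2)*((1:ℝ)+t/2)*((n:ℝ)+1+(s+t)/2) + (((n:ℝ)-(m:ℝ)+1+s/2)+((1:ℝ)+t/2))*((n:ℝ)+1+(s+t)/2)*(((n:ℝ)-(m:ℝ)+1+s/2)+((1:ℝ)+t/2)) + (((n:ℝ)-(m:ℝ)+1+s/2)+((1:ℝ)+t/2))*((n:ℝ)+1+(s+t)/2)*(((n:ℝ)-(m:ℝ)+1+s/2)*((1:ℝ)+t/2)))), ?_⟩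
  intro k hk
  have hk1 : (1:ℝ) ≤ (k:ℝ) := by exact_mod_cast hk
  have hk0 : (0:ℝ) < (k:ℝ) := by linarith
  have hk3one : (1:ℝ) ≤ (k:ℝ)^3 := by
    calc (1:ℝ) = 1^3 := by norm_num
      _ ≤ (k:ℝ)^3 := pow_le_pow_left₀ (by norm_num) hk1 3
  by_cases hkm : k < m
  · -- small k: crude bound
    simp only [if_pos hkm]
    have hkmR : (k:ℝ) + 1 ≤ (m:ℝ) := by exact_mod_cast hkm
    have hPpos : (0:ℝ) < (2 * ((k : ℝ) + n) + s + 2) := by positivity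
    have hQpos : (0:ℝ) < (2 * ((k : ℝ) + n) + t + 2) := by positivity
    have hT1nn : (0:ℝ) ≤ 4 * ((k : ℝ) + n + 1) / ((2 * ((k : ℝ) + n) + s + 2) * (2 * ((k : ℝ) + n) + t + 2)) := by positivity
    have hx0 : (0:ℝ) ≤ (k:ℝ) + (n:ℝ) := by positivity
    have hT1le : 4 * ((k : ℝ) + n + 1) / ((2 * ((k : ℝ) + n) + s + 2) * (2 * ((k : ℝ) + n) + t + 2)) ≤ 1 := by
      rw [div_le_one (by positivity)]
      have h1 : (2*((k:ℝ)+(n:ℝ))+2)*(2*((k:ℝ)+(n:ℝ))+2) ≤ (2 * ((k : ℝ) + n) + s + 2) * (2 * ((k : ℝ) + n) + t + 2) :=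
        mul_le_mul (by linarith) (by linarith) (by positivity) hPpos.le
      nlinarith [mul_nonneg hx0 hx0]
    have hcd : ((m : ℝ) * n + ((m : ℝ) * s + (n : ℝ) * t) / 2) / (k:ℝ)^3 ≤ ((m : ℝ) * n + ((m : ℝ) * s + (n : ℝ) * t) / 2) := div_le_self hc0 hk3one
    have hcdnn : (0:ℝ) ≤ ((m : ℝ) * n + ((m : ℝ) * s + (n : ℝ) * t) / 2) / (k:ℝ)^3 := by positivity
    have habs : |4 * ((k : ℝ) + n + 1) / ((2 * ((k : ℝ) + n) + s + 2) * (2 * ((k : ℝ) + n) + t + 2))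
        - ((m : ℝ) * n + ((m : ℝ) * s + (n : ℝ) * t) / 2) / (k : ℝ) ^ 3| ≤ 1 + ((m : ℝ) * n + ((m : ℝ) * s + (n : ℝ) * t) / 2) := by
      rw [abs_le]; constructor <;> linarith
    refine habs.trans ?_
    rw [le_div_iff₀ (by positivity)]
    have hk4 : (k:ℝ)^4 ≤ (m:ℝ)^4 := pow_le_pow_left₀ hk0.le (by linarith) 4
    have h1c : (0:ℝ) ≤ 1 + ((m : ℝ) * n + ((m : ℝ) * s + (n : ℝ) * t) / 2) := by linarith
    have hmul := mul_le_mul_of_nonneg_left hk4 h1c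
    linarith
  · -- large k: expansion with degree-1 remainders
    simp only [if_neg hkm]
    push_neg at hkm
    have hmk : (m:ℝ) ≤ (k:ℝ) := by exact_mod_cast hkm
    have hPpos : (0:ℝ) < (2 * ((k : ℝ) + n) + s + 2) := by positivity
    have hQpos : (0:ℝ) < (2 * ((k : ℝ) + n) + t + 2) := by positivity
    have hRpos : (0:ℝ) < (2 * ((k : ℝ) + n - m) + s + 2) := by linarith
    have hSpos : (0:ℝ) < (2 * (k : ℝ) + t + 2) := by positivity
    have hq1 : (0:ℝ) ≤ ((n:ℝ)+1+s/2) := by positivity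
    have hr1 : (0:ℝ) ≤ ((n:ℝ)+1+t/2) := by positivity
    have hq1w : ((n:ℝ)+1+s/2) ≤ ((n:ℝ)+1+(s+t)/2) := by linarith
    have hq2w : ((n:ℝ)-(m:ℝ)+1+s/2) ≤ ((n:ℝ)+1+(s+t)/2) := by linarith
    have hkne : (k:ℝ) ≠ 0 := hk0.ne'
    have hkq1 : ((k:ℝ)+((n:ℝ)+1+s/2)) ≠ 0 := by positivity
    have hkr1 : ((k:ℝ)+((n:ℝ)+1+t/2)) ≠ 0 := by positivity
    have hkq2 : ((k:ℝ)+((n:ℝ)-(m:ℝ)+1+s/2)) ≠ 0 := by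
      have h : (0:ℝ) < (k:ℝ)+((n:ℝ)-(m:ℝ)+1+s/2) := by linarith
      exact h.ne'
    have hkr2 : ((k:ℝ)+((1:ℝ)+t/2)) ≠ 0 := by positivity
    have hD1ne : ((k:ℝ)^3*(((k:ℝ)+((n:ℝ)+1+s/2))*((k:ℝ)+((n:ℝ)+1+t/2)))) ≠ 0 := mul_ne_zero (pow_ne_zero 3 hkne) (mul_ne_zero hkq1 hkr1)
    have hD2ne : ((k:ℝ)^3*(((k:ℝ)+((n:ℝ)-(m:ℝ)+1+s/2))*((k:ℝ)+((1:ℝ)+t/2)))) ≠ 0 := mul_ne_zero (pow_ne_zero 3 hkne) (mul_ne_zero hkq2 hkr2)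
    have key1 : 4 * ((k : ℝ) + n + 1) / ((2 * ((k : ℝ) + n) + s + 2) * (2 * ((k : ℝ) + n) + t + 2)) - ((((n:ℝ)+1+s/2)*((n:ℝ)+1+t/2)*((n:ℝ)+1+(s+t)/2) - ((((n:ℝ)+1+s/2)+((n:ℝ)+1+t/2))*((n:ℝ)+1+(s+t)/2) - ((n:ℝ)+1+s/2)*((n:ℝ)+1+t/2))*(((n:ℝ)+1+s/2)+((n:ℝ)+1+t/2)))*(k:ℝ) - ((((n:ℝ)+1+s/2)+((n:ℝ)+1+t/2))*((n:ℝ)+1+(s+t)/2) - ((n:ℝ)+1+s/2)*((n:ℝ)+1+t/2))*(((n:ℝ)+1+s/2)*((n:ℝ)+1+t/2))) / ((k:ℝ)^3*(((k:ℝ)+((n:ℝ)+1+s/2))*((k:ℝ)+((n:ℝ)+1+t/2))))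
        = ((k:ℝ)^2 - ((n:ℝ)+1+(s+t)/2)*(k:ℝ) + ((((n:ℝ)+1+s/2)+((n:ℝ)+1+t/2))*((n:ℝ)+1+(s+t)/2) - ((n:ℝ)+1+s/2)*((n:ℝ)+1+t/2)))/(k:ℝ)^3 := by
      rw [div_sub_div _ _ (mul_pos hPpos hQpos).ne' hD1ne,
          div_eq_div_iff (mul_ne_zero (mul_pos hPpos hQpos).ne' hD1ne) (pow_ne_zero 3 hkne)]
      ring
    have key2 : 4 * ((k : ℝ) - m + 1) / ((2 * ((k : ℝ) + n - m) + s + 2) * (2 * (k : ℝ) + t + 2)) - ((((n:ℝ)-(m:ℝ)+1+s/2)*((1:ℝ)+t/2)*((n:ℝ)+1+(s+t)/2) - ((((n:ℝ)-(m:ℝ)+1+s/2)+((1:ℝ)+t/2))*((n:ℝ)+1+(s+t)/2) - ((n:ℝ)-(m:ℝ)+1+s/2)*((1:ℝ)+t/2))*(((n:ℝ)-(m:ℝ)+1+s/2)+((1:ℝ)+t/2)))*(k:ℝ) - ((((n:ℝ)-(m:ℝ)+1+s/2)+((1:ℝ)+t/2))*((n:ℝ)+1+(s+t)/2) - ((n:ℝ)-(m:ℝ)+1+s/2)*((1:ℝ)+t/2))*(((n:ℝ)-(m:ℝ)+1+s/2)*((1:ℝ)+t/2)))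 / ((k:ℝ)^3*(((k:ℝ)+((n:ℝ)-(m:ℝ)+1+s/2))*((k:ℝ)+((1:ℝ)+t/2))))
        = ((k:ℝ)^2 - ((n:ℝ)+1+(s+t)/2)*(k:ℝ) + ((((n:ℝ)-(m:ℝ)+1+s/2)+((1:ℝ)+t/2))*((n:ℝ)+1+(s+t)/2) - ((n:ℝ)-(m:ℝ)+1+s/2)*((1:ℝ)+t/2)))/(k:ℝ)^3 := by
      rw [div_sub_div _ _ (mul_pos hRpos hSpos).ne' hD2ne,
          div_eq_div_iff (mul_ne_zero (mul_pos hRpos hSpos).ne' hD2ne) (pow_ne_zero 3 hkne)]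
      ring
    have h0 : ((k:ℝ)^2 - ((n:ℝ)+1+(s+t)/2)*(k:ℝ) + ((((n:ℝ)+1+s/2)+((n:ℝ)+1+t/2))*((n:ℝ)+1+(s+t)/2) - ((n:ℝ)+1+s/2)*((n:ℝ)+1+t/2)))/(k:ℝ)^3
        - ((k:ℝ)^2 - ((n:ℝ)+1+(s+t)/2)*(k:ℝ) + ((((n:ℝ)-(m:ℝ)+1+s/2)+((1:ℝ)+t/2))*((n:ℝ)+1+(s+t)/2) - ((n:ℝ)-(m:ℝ)+1+s/2)*((1:ℝ)+t/2)))/(k:ℝ)^3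
        - ((m : ℝ) * n + ((m : ℝ) * s + (n : ℝ) * t) / 2) / (k : ℝ) ^ 3 = 0 := by
      rw [div_sub_div_same, div_sub_div_same, div_eq_zero_iff]
      left
      ring
    have key : 4 * ((k : ℝ) + n + 1) / ((2 * ((k : ℝ) + n) + s + 2) * (2 * ((k : ℝ) + n) + t + 2))
              - 4 * ((k : ℝ) - m + 1) /
                  ((2 * ((k : ℝ) + n - m) + s + 2) * (2 * (k : ℝ) + t + 2))
        - ((m : ℝ) * n + ((m : ℝ) * s + (n : ℝ) * t) / 2) / (k : ℝ) ^ 3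
        = ((((n:ℝ)+1+s/2)*((n:ℝ)+1+t/2)*((n:ℝ)+1+(s+t)/2) - ((((n:ℝ)+1+s/2)+((n:ℝ)+1+t/2))*((n:ℝ)+1+(s+t)/2) - ((n:ℝ)+1+s/2)*((n:ℝ)+1+t/2))*(((n:ℝ)+1+s/2)+((n:ℝ)+1+t/2)))*(k:ℝ) - ((((n:ℝ)+1+s/2)+((n:ℝ)+1+t/2))*((n:ℝ)+1+(s+t)/2) - ((n:ℝ)+1+s/2)*((n:ℝ)+1+t/2))*(((n:ℝ)+1+s/2)*((n:ℝ)+1+t/2))) / ((k:ℝ)^3*(((k:ℝ)+((n:ℝ)+1+s/2))*((k:ℝ)+((n:ℝ)+1+t/2)))) - ((((n:ℝ)-(m:ℝ)+1+s/2)*((1:ℝ)+t/2)*((n:ℝ)+1+(s+t)/2) - ((((n:ℝ)-(m:ℝ)+1+s/2)+((1:ℝ)+t/2))*((n:ℝ)+1+(s+t)/2) - ((n:ℝ)-(m:ℝ)+1+s/2)*((1:ℝ)+t/2))*(((n:ℝ)-(m:ℝ)+1+s/2)+((1:ℝ)+t/2)))*(k:ℝ) - ((((n:ℝ)-(m:ℝ)+1+s/2)+((1:ℝ)+t/2))*((n:ℝ)+1+(s+t)/2)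 - ((n:ℝ)-(m:ℝ)+1+s/2)*((1:ℝ)+t/2))*(((n:ℝ)-(m:ℝ)+1+s/2)*((1:ℝ)+t/2))) / ((k:ℝ)^3*(((k:ℝ)+((n:ℝ)-(m:ℝ)+1+s/2))*((k:ℝ)+((1:ℝ)+t/2)))) := by
      linarith [key1, key2, h0]
    rw [key]
    have hG1 := aux14 ((n:ℝ)+1+s/2) ((n:ℝ)+1+t/2) ((n:ℝ)+1+(s+t)/2) (k:ℝ) hq1 hr1 hq1w hk1
    have hG2 := aux14 ((n:ℝ)-(m:ℝ)+1+s/2) ((1:ℝ)+t/2) ((n:ℝ)+1+(s+t)/2) (k:ℝ) hq2 hr2 hq2w hk1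
    calc |((((n:ℝ)+1+s/2)*((n:ℝ)+1+t/2)*((n:ℝ)+1+(s+t)/2) - ((((n:ℝ)+1+s/2)+((n:ℝ)+1+t/2))*((n:ℝ)+1+(s+t)/2) - ((n:ℝ)+1+s/2)*((n:ℝ)+1+t/2))*(((n:ℝ)+1+s/2)+((n:ℝ)+1+t/2)))*(k:ℝ) - ((((n:ℝ)+1+s/2)+((n:ℝ)+1+t/2))*((n:ℝ)+1+(s+t)/2) - ((n:ℝ)+1+s/2)*((n:ℝ)+1+t/2))*(((n:ℝ)+1+s/2)*((n:ℝ)+1+t/2))) / ((k:ℝ)^3*(((k:ℝ)+((n:ℝ)+1+s/2))*((k:ℝ)+((n:ℝ)+1+t/2)))) - ((((n:ℝ)-(m:ℝ)+1+s/2)*((1:ℝ)+t/2)*((n:ℝ)+1+(s+t)/2) - ((((n:ℝ)-(m:ℝ)+1+s/2)+((1:ℝ)+t/2))*((n:ℝ)+1+(s+t)/2) - ((n:ℝ)-(m:ℝ)+1+s/2)*((1:ℝ)+t/2))*(((n:ℝ)-(m:ℝ)+1+s/2)+((1:ℝ)+t/2)))*(k:ℝ) - ((((n:ℝ)-(m:ℝ)+1+s/2)+((1:ℝ)+t/2))*((n:ℝ)+1+(s+t)/2)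 - ((n:ℝ)-(m:ℝ)+1+s/2)*((1:ℝ)+t/2))*(((n:ℝ)-(m:ℝ)+1+s/2)*((1:ℝ)+t/2))) / ((k:ℝ)^3*(((k:ℝ)+((n:ℝ)-(m:ℝ)+1+s/2))*((k:ℝ)+((1:ℝ)+t/2))))|
        ≤ |((((n:ℝ)+1+s/2)*((n:ℝ)+1+t/2)*((n:ℝ)+1+(s+t)/2) - ((((n:ℝ)+1+s/2)+((n:ℝ)+1+t/2))*((n:ℝ)+1+(s+t)/2) - ((n:ℝ)+1+s/2)*((n:ℝ)+1+t/2))*(((n:ℝ)+1+s/2)+((n:ℝ)+1+t/2)))*(k:ℝ) - ((((n:ℝ)+1+s/2)+((n:ℝ)+1+t/2))*((n:ℝ)+1+(s+t)/2) - ((n:ℝ)+1+s/2)*((n:ℝ)+1+t/2))*(((n:ℝ)+1+s/2)*((n:ℝ)+1+t/2))) / ((k:ℝ)^3*(((k:ℝ)+((n:ℝ)+1+s/2))*((k:ℝ)+((n:ℝ)+1+t/2))))| + |((((n:ℝ)-(m:ℝ)+1+s/2)*((1:ℝ)+t/2)*((n:ℝ)+1+(s+t)/2) - ((((n:ℝ)-(m:ℝ)+1+s/2)+((1:ℝ)+t/2))*((n:ℝ)+1+(s+t)/2)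 - ((n:ℝ)-(m:ℝ)+1+s/2)*((1:ℝ)+t/2))*(((n:ℝ)-(m:ℝ)+1+s/2)+((1:ℝ)+t/2)))*(k:ℝ) - ((((n:ℝ)-(m:ℝ)+1+s/2)+((1:ℝ)+t/2))*((n:ℝ)+1+(s+t)/2) - ((n:ℝ)-(m:ℝ)+1+s/2)*((1:ℝ)+t/2))*(((n:ℝ)-(m:ℝ)+1+s/2)*((1:ℝ)+t/2))) / ((k:ℝ)^3*(((k:ℝ)+((n:ℝ)-(m:ℝ)+1+s/2))*((k:ℝ)+((1:ℝ)+t/2))))| := abs_sub _ _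
      _ ≤ (((n:ℝ)+1+s/2)*((n:ℝ)+1+t/2)*((n:ℝ)+1+(s+t)/2) + (((n:ℝ)+1+s/2)+((n:ℝ)+1+t/2))*((n:ℝ)+1+(s+t)/2)*(((n:ℝ)+1+s/2)+((n:ℝ)+1+t/2)) + (((n:ℝ)+1+s/2)+((n:ℝ)+1+t/2))*((n:ℝ)+1+(s+t)/2)*(((n:ℝ)+1+s/2)*((n:ℝ)+1+t/2))) / (k:ℝ)^4 + (((n:ℝ)-(m:ℝ)+1+s/2)*((1:ℝ)+t/2)*((n:ℝ)+1+(s+t)/2) + (((n:ℝ)-(m:ℝ)+1+s/2)+((1:ℝ)+t/2))*((n:ℝ)+1+(s+t)/2)*(((n:ℝ)-(m:ℝ)+1+s/2)+((1:ℝ)+t/2)) + (((n:ℝ)-(m:ℝ)+1+s/2)+((1:ℝ)+t/2))*((n:ℝ)+1+(s+t)/2)*(((n:ℝ)-(m:ℝ)+1+s/2)*((1:ℝ)+t/2))) / (k:ℝ)^4 := add_le_add hG1 hG2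
      _ = ((((n:ℝ)+1+s/2)*((n:ℝ)+1+t/2)*((n:ℝ)+1+(s+t)/2) + (((n:ℝ)+1+s/2)+((n:ℝ)+1+t/2))*((n:ℝ)+1+(s+t)/2)*(((n:ℝ)+1+s/2)+((n:ℝ)+1+t/2)) + (((n:ℝ)+1+s/2)+((n:ℝ)+1+t/2))*((n:ℝ)+1+(s+t)/2)*(((n:ℝ)+1+s/2)*((n:ℝ)+1+t/2))) + (((n:ℝ)-(m:ℝ)+1+s/2)*((1:ℝ)+t/2)*((n:ℝ)+1+(s+t)/2) + (((n:ℝ)-(m:ℝ)+1+s/2)+((1:ℝ)+t/2))*((n:ℝ)+1+(s+t)/2)*(((n:ℝ)-(m:ℝ)+1+s/2)+((1:ℝ)+t/2)) + (((n:ℝ)-(m:ℝ)+1+s/2)+((1:ℝ)+t/2))*((n:ℝ)+1+(s+t)/2)*(((n:ℝ)-(m:ℝ)+1+s/2)*((1:ℝ)+t/2)))) / (k:ℝ)^4 := by rw [← add_div]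
      _ ≤ ((m:ℝ)^4*(1 + ((m : ℝ) * n + ((m : ℝ) * s + (n : ℝ) * t) / 2)) + ((((n:ℝ)+1+s/2)*((n:ℝ)+1+t/2)*((n:ℝ)+1+(s+t)/2) + (((n:ℝ)+1+s/2)+((n:ℝ)+1+t/2))*((n:ℝ)+1+(s+t)/2)*(((n:ℝ)+1+s/2)+((n:ℝ)+1+t/2)) + (((n:ℝ)+1+s/2)+((n:ℝ)+1+t/2))*((n:ℝ)+1+(s+t)/2)*(((n:ℝ)+1+s/2)*((n:ℝ)+1+t/2))) + (((n:ℝ)-(m:ℝ)+1+s/2)*((1:ℝ)+t/2)*((n:ℝ)+1+(s+t)/2) + (((n:ℝ)-(m:ℝ)+1+s/2)+((1:ℝ)+t/2))*((n:ℝ)+1+(s+t)/2)*(((n:ℝ)-(m:ℝ)+1+s/2)+((1:ℝ)+t/2)) + (((n:ℝ)-(m:ℝ)+1+s/2)+((1:ℝ)+t/2))*((n:ℝ)+1+(s+t)/2)*(((n:ℝ)-(m:ℝ)+1+s/2)*((1:ℝ)+t/2))))) / (k : ℝ) ^ 4 := by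
          apply div_le_div₀ (by positivity) ?_ (by positivity) le_rfl
          have h4 : (0:ℝ) ≤ (m:ℝ)^4*(1 + ((m : ℝ) * n + ((m : ℝ) * s + (n : ℝ) * t) / 2)) := by positivity
          linarith
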